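/- Let $X_i = AS_i + H_i$ for $i \in \{k, l\}$ with $A$ invertible with columns $a_1,\dots,a_d$, $V = A^{-1}$ with rows $v_1,\dots,v_d$, $S_i$ independent of $H_i$, $\operatorname{Cov}(S_k), \operatorname{Cov}(S_l)$ diagonal, and $\operatorname{Cov}(H_k) = \operatorname{Cov}(H_l)$. Then for each $j$, $(\operatorname{Cov}(X_k) - \operatorname{Cov}(X_l)) v_j^\top = a_j (\operatorname{Var}(S^j_k) - \operatorname{Var}(S^j_l))$. -/

import Mathlib

open Matrix MeasureTheory ProbabilityTheory
open scoped ENNReal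

/-- Covariance matrix `Cov(X, Y)` of two `ℝ^d`-valued random vectors. -/
noncomputable def covMat {Ω : Type*} [MeasurableSpace Ω] (μ : Measure Ω) {d : ℕ}
    (X Y : Ω → Fin d → ℝ) : Matrix (Fin d) (Fin d) ℝ :=
  Matrix.of fun i j =>
    ∫ ω, (X ω i - ∫ ω', X ω' i ∂μ) * (Y ω j - ∫ ω', Y ω' j ∂μ) ∂μ

section Aux

variable {Ω : Type*} [MeasurableSpace Ω] {μ : Measure Ω} [IsProbabilityMeasure μ]

lemma half_add_half : (1 : ℝ≥0∞) / 1 = 1 / 2 + 1 / 2 := by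
  rw [ENNReal.div_add_div_same, one_add_one_eq_two, div_one]
  exact (ENNReal.div_self (by norm_num) (by norm_num)).symm

omit [IsProbabilityMeasure μ] in
lemma l2_mul_integrable {f g : Ω → ℝ} (hf : MemLp f 2 μ) (hg : MemLp g 2 μ) :
    Integrable (fun ω => f ω * g ω) μ := by
  have h : MemLp (g • f) 1 μ := hf.smul hg
  rw [memLp_one_iff_integrable] at h
  exact (by simpa [smul_eq_mul, mul_comm] using h : Integrable (f * g) μ)

lemma integral_centered {f : Ω → ℝ} (hf : MemLp f 2 μ) :
    ∫ ω, (f ω - ∫ ω', f ω' ∂μ) ∂μ = 0 := by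
  rw [integral_sub (hf.integrable one_le_two) (integrable_const _), integral_const]
  simp

/-- Cross covariance of independent random vectors vanishes entrywise. -/
lemma cross_zero {d : ℕ} {S H : Ω → Fin d → ℝ}
    (hSm : Measurable S) (hHm : Measurable H)
    (hS2 : ∀ i, MemLp (fun ω => S ω i) 2 μ) (hH2 : ∀ i, MemLp (fun ω => H ω i) 2 μ)
    (hindep : IndepFun S H μ) (k j : Fin d) :
    ∫ ω, (S ω k - ∫ ω', S ω' k ∂μ) * (H ω j - ∫ ω', H ω' j ∂μ) ∂μ = 0 := by
  set cS : Ω → ℝ := fun ω => S ω k - ∫ ω', S ω' k ∂μ with hcS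
  set cH : Ω → ℝ := fun ω => H ω j - ∫ ω', H ω' j ∂μ with hcH
  have hi : IndepFun cS cH μ := by
    have := hindep.comp (φ := fun v : Fin d → ℝ => v k - ∫ ω', S ω' k ∂μ)
      (ψ := fun v : Fin d → ℝ => v j - ∫ ω', H ω' j ∂μ)
      (by fun_prop)
      (by fun_prop)
    exact this
  have h1 : MemLp cS 2 μ := (hS2 k).sub (memLp_const _)
  have h2 : MemLp cH 2 μ := (hH2 j).sub (memLp_const _)
  have := hi.integral_fun_mul_eq_mul_integral h1.aestronglyMeasurable h2.aestronglyMeasurable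
  calc ∫ ω, cS ω * cH ω ∂μ = (∫ ω, cS ω ∂μ) * ∫ ω, cH ω ∂μ := this
    _ = 0 := by rw [integral_centered (hS2 k), zero_mul]

/-- Covariance decomposition of `X = A S + H` with `S ⟂ H`. -/
lemma cov_decomp {d : ℕ} {S H : Ω → Fin d → ℝ}
    (hSm : Measurable S) (hHm : Measurable H)
    (hS2 : ∀ i, MemLp (fun ω => S ω i) 2 μ) (hH2 : ∀ i, MemLp (fun ω => H ω i) 2 μ)
    (hindep : IndepFun S H μ) (A : Matrix (Fin d) (Fin d) ℝ)
    (X : Ω → Fin d → ℝ) (hX : ∀ ω, X ω = A.mulVec (S ω) + H ω) :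
    covMat μ X X = A * covMat μ S S * Aᵀ + covMat μ H H := by
  -- centered components
  set cS : Fin d → Ω → ℝ := fun k ω => S ω k - ∫ ω', S ω' k ∂μ with hcSdef
  set cH : Fin d → Ω → ℝ := fun k ω => H ω k - ∫ ω', H ω' k ∂μ with hcHdef
  have hcS2 : ∀ k, MemLp (cS k) 2 μ := fun k => (hS2 k).sub (memLp_const _)
  have hcH2 : ∀ k, MemLp (cH k) 2 μ := fun k => (hH2 k).sub (memLp_const _)
  have hXval : ∀ ω i, X ω i = (∑ k, A i k * S ω k) + H ω i := by
    intro ω i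
    rw [hX ω]
    simp [Matrix.mulVec, dotProduct]
  -- mean of X i
  have hmean : ∀ i, ∫ ω, X ω i ∂μ = (∑ k, A i k * ∫ ω, S ω k ∂μ) + ∫ ω, H ω i ∂μ := by
    intro i
    have h1 : ∀ k : Fin d, Integrable (fun ω => A i k * S ω k) μ :=
      fun k => ((hS2 k).integrable one_le_two).const_mul _
    calc ∫ ω, X ω i ∂μ = ∫ ω, ((∑ k, A i k * S ω k) + H ω i) ∂μ := by
          congr 1; funext ω; exact hXval ω i
      _ = (∫ ω, ∑ k, A i k * S ω k ∂μ) + ∫ ω, H ω i ∂μ :=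
          integral_add (integrable_finset_sum _ fun k _ => h1 k)
            ((hH2 i).integrable one_le_two)
      _ = (∑ k, ∫ ω, A i k * S ω k ∂μ) + ∫ ω, H ω i ∂μ := by
          rw [integral_finset_sum _ fun k _ => h1 k]
      _ = (∑ k, A i k * ∫ ω, S ω k ∂μ) + ∫ ω, H ω i ∂μ := by
          simp_rw [integral_const_mul]
  -- centered X i
  have hcX : ∀ i ω, X ω i - ∫ ω', X ω' i ∂μ = (∑ k, A i k * cS k ω) + cH i ω := by
    intro i ω
    rw [hXval ω i, hmean i]
    simp only [hcSdef, hcHdef, mul_sub, Finset.sum_sub_distrib]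
    ring
  ext i j
  rw [covMat, Matrix.add_apply, Matrix.of_apply]
  simp only [hcX]
  set P : Ω → ℝ := fun ω => ∑ k, A i k * cS k ω with hPdef
  set Q : Ω → ℝ := fun ω => ∑ l, A j l * cS l ω with hQdef
  have hP2 : MemLp P 2 μ := by
    have h := memLp_finset_sum' (μ := μ) (p := 2) Finset.univ
      (f := fun (k : Fin d) ω => A i k * cS k ω) (fun k _ => (hcS2 k).const_mul _)
    have hPe : P = ∑ k : Fin d, fun ω => A i k * cS k ω := by
      funext ω; simp [hPdef, Finset.sum_apply]
    rw [hPe]; exact h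
  have hQ2 : MemLp Q 2 μ := by
    have h := memLp_finset_sum' (μ := μ) (p := 2) Finset.univ
      (f := fun (l : Fin d) ω => A j l * cS l ω) (fun l _ => (hcS2 l).const_mul _)
    have hQe : Q = ∑ l : Fin d, fun ω => A j l * cS l ω := by
      funext ω; simp [hQdef, Finset.sum_apply]
    rw [hQe]; exact h
  have hint_PQ : Integrable (fun ω => P ω * Q ω) μ := l2_mul_integrable hP2 hQ2
  have hint_PH : Integrable (fun ω => P ω * cH j ω) μ := l2_mul_integrable hP2 (hcH2 j)
  have hint_HQ : Integrable (fun ω => cH i ω * Q ω) μ := l2_mul_integrable (hcH2 i) hQ2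
  have hint_HH : Integrable (fun ω => cH i ω * cH j ω) μ := l2_mul_integrable (hcH2 i) (hcH2 j)
  have expand : ∀ ω, ((∑ k, A i k * cS k ω) + cH i ω) * ((∑ l, A j l * cS l ω) + cH j ω)
      = P ω * Q ω + P ω * cH j ω + cH i ω * Q ω + cH i ω * cH j ω := by
    intro ω; simp only [hPdef, hQdef]; ring
  rw [show (∫ ω, ((∑ k, A i k * cS k ω) + cH i ω) * ((∑ l, A j l * cS l ω) + cH j ω) ∂μ)
      = ∫ ω, (P ω * Q ω + P ω * cH j ω + cH i ω * Q ω + cH i ω * cH j ω) ∂μ by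
    congr 1; funext ω; exact expand ω]
  have hi1 : Integrable (fun ω => P ω * Q ω + P ω * cH j ω) μ := hint_PQ.add hint_PH
  have hi2 : Integrable (fun ω => P ω * Q ω + P ω * cH j ω + cH i ω * Q ω) μ := hi1.add hint_HQ
  rw [integral_add hi2 hint_HH, integral_add hi1 hint_HQ, integral_add hint_PQ hint_PH]
  -- cross terms vanish
  have hPH0 : ∫ ω, P ω * cH j ω ∂μ = 0 := by
    have hrw : ∀ ω, P ω * cH j ω = ∑ k, A i k * (cS k ω * cH j ω) := by
      intro ω; simp only [hPdef, Finset.sum_mul, mul_assoc]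
    rw [show (∫ ω, P ω * cH j ω ∂μ) = ∫ ω, ∑ k, A i k * (cS k ω * cH j ω) ∂μ by
      congr 1; funext ω; exact hrw ω]
    rw [integral_finset_sum _ fun k _ =>
      (l2_mul_integrable (hcS2 k) (hcH2 j)).const_mul _]
    refine Finset.sum_eq_zero fun k _ => ?_
    rw [integral_const_mul, cross_zero hSm hHm hS2 hH2 hindep k j, mul_zero]
  have hHQ0 : ∫ ω, cH i ω * Q ω ∂μ = 0 := by
    have hrw : ∀ ω, cH i ω * Q ω = ∑ l, A j l * (cS l ω * cH i ω) := by
      intro ω; simp only [hQdef, Finset.mul_sum]; congr 1; funext l; ring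
    rw [show (∫ ω, cH i ω * Q ω ∂μ) = ∫ ω, ∑ l, A j l * (cS l ω * cH i ω) ∂μ by
      congr 1; funext ω; exact hrw ω]
    rw [integral_finset_sum _ fun l _ =>
      (l2_mul_integrable (hcS2 l) (hcH2 i)).const_mul _]
    refine Finset.sum_eq_zero fun l _ => ?_
    rw [integral_const_mul, cross_zero hSm hHm hS2 hH2 hindep l i, mul_zero]
  -- main term
  have hPQ : ∫ ω, P ω * Q ω ∂μ = (A * covMat μ S S * Aᵀ) i j := by
    have hrw : ∀ ω, P ω * Q ω = ∑ k, ∑ l, A i k * A j l * (cS k ω * cS l ω) := by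
      intro ω
      simp only [hPdef, hQdef]
      rw [Finset.sum_mul_sum]
      exact Finset.sum_congr rfl fun k _ => Finset.sum_congr rfl fun l _ => by ring
    rw [show (∫ ω, P ω * Q ω ∂μ) = ∫ ω, ∑ k, ∑ l, A i k * A j l * (cS k ω * cS l ω) ∂μ by
      congr 1; funext ω; exact hrw ω]
    rw [integral_finset_sum _ fun k _ => integrable_finset_sum _ fun l _ =>
      (l2_mul_integrable (hcS2 k) (hcS2 l)).const_mul _]
    have : ∀ k : Fin d, ∫ ω, ∑ l, A i k * A j l * (cS k ω * cS l ω) ∂μ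
        = ∑ l, A i k * A j l * covMat μ S S k l := by
      intro k
      rw [integral_finset_sum _ fun l _ =>
        (l2_mul_integrable (hcS2 k) (hcS2 l)).const_mul _]
      exact Finset.sum_congr rfl fun l _ => by rw [integral_const_mul]; rfl
    simp_rw [this]
    simp only [Matrix.mul_apply, Matrix.transpose_apply, Finset.sum_mul]
    rw [Finset.sum_comm]
    exact Finset.sum_congr rfl fun l _ => Finset.sum_congr rfl fun k _ => by ring
  rw [hPH0, hHQ0, hPQ]
  simp [covMat, hcHdef]

end Aux

/-- Under stationary confounding, `(Cov(Xₖ) - Cov(Xₗ)) vⱼᵀ = aⱼ (Var(Sʲₖ) - Var(Sʲₗ))`. -/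
theorem stmt9 {Ω : Type*} [MeasurableSpace Ω] (μ : Measure Ω) [IsProbabilityMeasure μ]
    {d : ℕ} (Sk Sl Hk Hl : Ω → Fin d → ℝ)
    (hSkmeas : Measurable Sk) (hSlmeas : Measurable Sl)
    (hHkmeas : Measurable Hk) (hHlmeas : Measurable Hl)
    (hSk2 : ∀ i, MemLp (fun ω => Sk ω i) 2 μ)
    (hSl2 : ∀ i, MemLp (fun ω => Sl ω i) 2 μ)
    (hHk2 : ∀ i, MemLp (fun ω => Hk ω i) 2 μ)
    (hHl2 : ∀ i, MemLp (fun ω => Hl ω i) 2 μ)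
    (hindepk : IndepFun Sk Hk μ) (hindepl : IndepFun Sl Hl μ)
    (hdiagk : (covMat μ Sk Sk).IsDiag) (hdiagl : (covMat μ Sl Sl).IsDiag)
    (hstat : covMat μ Hk Hk = covMat μ Hl Hl)
    (A : Matrix (Fin d) (Fin d) ℝ) (hA : IsUnit A)
    (Xk Xl : Ω → Fin d → ℝ)
    (hXk : ∀ ω, Xk ω = A.mulVec (Sk ω) + Hk ω)
    (hXl : ∀ ω, Xl ω = A.mulVec (Sl ω) + Hl ω)
    (V : Matrix (Fin d) (Fin d) ℝ) (hV : V = A⁻¹) :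
    ∀ j i, (covMat μ Xk Xk - covMat μ Xl Xl).mulVec (fun k => V j k) i =
      A i j * (covMat μ Sk Sk j j - covMat μ Sl Sl j j) := by
  intro j i
  have hk := cov_decomp hSkmeas hHkmeas hSk2 hHk2 hindepk A Xk hXk
  have hl := cov_decomp hSlmeas hHlmeas hSl2 hHl2 hindepl A Xl hXl
  set D : Matrix (Fin d) (Fin d) ℝ := covMat μ Sk Sk - covMat μ Sl Sl with hD
  have hdiff : covMat μ Xk Xk - covMat μ Xl Xl = A * D * Aᵀ := by
    rw [hk, hl, hstat, hD]
    noncomm_ring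
  have hDdiag : D.IsDiag := hdiagk.sub hdiagl
  -- Aᵀ.mulVec (V j) = Pi.single j 1
  have hVA : V * A = 1 := by
    rw [hV]
    exact Matrix.nonsing_inv_mul A ((Matrix.isUnit_iff_isUnit_det A).mp hA)
  have hAT : Aᵀ.mulVec (fun k => V j k) = Pi.single j 1 := by
    funext l
    have : (V * A) j l = (1 : Matrix (Fin d) (Fin d) ℝ) j l := by rw [hVA]
    simp only [Matrix.mul_apply, Matrix.one_apply] at this
    simp only [Matrix.mulVec, dotProduct, Matrix.transpose_apply]
    rw [show (∑ k, A k l * V j k) = ∑ k, V j k * A k l from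
      Finset.sum_congr rfl fun k _ => mul_comm _ _, this]
    by_cases h : j = l
    · subst h; simp
    · simp [Pi.single_apply, h, Ne.symm h]
  rw [hdiff, ← Matrix.mulVec_mulVec, ← Matrix.mulVec_mulVec, hAT]
  have hDs : D.mulVec (Pi.single j 1) = Pi.single j (D j j) := by
    funext l
    simp only [Matrix.mulVec_single_one, Matrix.col_apply]
    by_cases h : l = j
    · subst h; simp
    · rw [hDdiag h]
      simp [Pi.single_apply, Ne.symm h]
  rw [hDs]
  rw [show Pi.single j (D j j) = D j j • (Pi.single j 1 : Fin d → ℝ) by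
    funext l; by_cases h : l = j <;> simp [Pi.single_apply, h]]
  rw [Matrix.mulVec_smul, Matrix.mulVec_single]
  simp [hD, mul_comm]
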